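/- Fix r ∈ (0,1] and p ∈ [1,∞]. For every θ ∈ (0,π/2), ∬_{{(x,y) ∈ (0,∞)² : y ≤ min(x·tanθ, y_p(x))}} 2r·x·y/(x+y)³ dx dy = 2r·∫₀^θ ‖(sinϑ, cosϑ)‖_p · (sinϑ + cosϑ)^{−3} dϑ. (This identifies the absolutely continuous part of the spectral measure of the mixture model, whose limit measure Λ satisfies Λ([0,x]×[0,y]) = r·xy/(x+y) and hence has density λ(x,y) = 2rxy/(x+y)³ on (0,∞)².) -/

import Mathlib

open MeasureTheory Set Real Filter Topology
open scoped ENNReal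

noncomputable section

/-- The `L_p` norm on `ℝ²`, for `p ∈ [1,∞]`. -/
def lpnorm (p : ℝ≥0∞) (z : ℝ × ℝ) : ℝ :=
  if p = ⊤ then max |z.1| |z.2|
  else (|z.1| ^ p.toReal + |z.2| ^ p.toReal) ^ (1 / p.toReal)

/-- The function `y_p : [0,∞) → [0,∞]`: for `p < ∞`, `y_p(x) = ∞` on `[0,1]` and
`y_p(x) = (1 + 1/(x^p - 1))^{1/p}` on `(1,∞)`; for `p = ∞`, `y_∞(x) = ∞` on `[0,1)`
and `y_∞(x) = 1` on `[1,∞)`. -/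
def ypR (p : ℝ≥0∞) (x : ℝ) : ℝ≥0∞ :=
  if p = ⊤ then (if x < 1 then ⊤ else 1)
  else if x ≤ 1 then ⊤
  else ENNReal.ofReal ((1 + 1 / (x ^ p.toReal - 1)) ^ (1 / p.toReal))

lemma lintegral_polarCoord_symm (g : ℝ × ℝ → ℝ≥0∞) :
    ∫⁻ q, g q = ∫⁻ q in polarCoord.target, ENNReal.ofReal q.1 * g (polarCoord.symm q) := by
  set B : ℝ × ℝ → ℝ × ℝ →L[ℝ] ℝ × ℝ := fun q =>
    LinearMap.toContinuousLinearMap (Matrix.toLin (Module.Basis.finTwoProd ℝ) (Module.Basis.finTwoProd ℝ)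
      !![Real.cos q.2, -q.1 * Real.sin q.2; Real.sin q.2, q.1 * Real.cos q.2]) with hB
  have A : ∀ q ∈ polarCoord.target,
      HasFDerivWithinAt polarCoord.symm (B q) polarCoord.target q :=
    fun q _ => (hasFDerivAt_polarCoord_symm q).hasFDerivWithinAt
  have B_det : ∀ q, (B q).det = q.1 := by
    intro q
    conv_rhs => rw [← one_mul q.1, ← cos_sq_add_sin_sq q.2]
    simp only [hB, neg_mul, LinearMap.det_toContinuousLinearMap, LinearMap.det_toLin,
      Matrix.det_fin_two_of, sub_neg_eq_add]
    ring
  calc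
    ∫⁻ q, g q = ∫⁻ q in polarCoord.source, g q := by
      rw [← setLIntegral_univ]
      exact (setLIntegral_congr polarCoord_source_ae_eq_univ).symm
    _ = ∫⁻ q in polarCoord.symm '' polarCoord.target, g q := by
      rw [polarCoord.symm_image_target_eq_source]
    _ = ∫⁻ q in polarCoord.target, ENNReal.ofReal |(B q).det| * g (polarCoord.symm q) :=
      lintegral_image_eq_lintegral_abs_det_fderiv_mul volume
        polarCoord.open_target.measurableSet A polarCoord.symm.injOn g
    _ = ∫⁻ q in polarCoord.target, ENNReal.ofReal q.1 * g (polarCoord.symm q) := by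
      refine setLIntegral_congr_fun_ae polarCoord.open_target.measurableSet
        (Filter.Eventually.of_forall fun q hq => ?_)
      rw [B_det, abs_of_pos hq.1]

lemma ypR_cond {p : ℝ≥0∞} (hp : p ≠ ⊤) (ht : 0 < p.toReal) {u v : ℝ}
    (hu : 0 < u) (hv : 0 < v) :
    (ENNReal.ofReal v ≤ ypR p u) ↔ 1 ≤ 1 / u ^ p.toReal + 1 / v ^ p.toReal := by
  set t := p.toReal
  unfold ypR
  rw [if_neg hp]
  by_cases h1 : u ≤ 1
  · rw [if_pos h1]
    have hut : u ^ t ≤ 1 := Real.rpow_le_one hu.le h1 ht.le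
    have h2 : 1 ≤ 1 / u ^ t := one_le_one_div (Real.rpow_pos_of_pos hu t) hut
    have h3 : (0:ℝ) ≤ 1 / v ^ t := by positivity
    simp only [le_top, true_iff]
    linarith
  · rw [if_neg h1]
    push_neg at h1
    have ha : 1 < u ^ t := Real.one_lt_rpow_iff_of_pos hu |>.mpr (Or.inl ⟨h1, ht⟩)
    set a := u ^ t with hadef
    set b := v ^ t with hbdef
    have hb : 0 < b := Real.rpow_pos_of_pos hv t
    have ha1 : 0 < a - 1 := by linarith
    have hW : (0:ℝ) ≤ (1 + 1 / (a - 1)) ^ (1 / t) := by positivity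
    rw [ENNReal.ofReal_le_ofReal_iff hW, one_div t,
      Real.le_rpow_inv_iff_of_pos hv.le (by positivity) ht, ← hbdef]
    have key : 1 + 1 / (a - 1) = a / (a - 1) := by field_simp; ring
    rw [key, le_div_iff₀ ha1, div_add_div _ _ (by positivity : a ≠ 0) hb.ne',
      le_div_iff₀ (by positivity : (0:ℝ) < a * b)]
    constructor <;> intro h <;> nlinarith

lemma radial_volume (p : ℝ≥0∞) (hp : 1 ≤ p) {s c : ℝ} (hs : 0 < s) (hc : 0 < c) :
    volume {ρ : ℝ | 0 < ρ ∧ ENNReal.ofReal (ρ * s) ≤ ypR p (ρ * c)} =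
      ENNReal.ofReal (lpnorm p (s, c) / (s * c)) := by
  by_cases hptop : p = ⊤
  · subst hptop
    have hlp : lpnorm ⊤ (s, c) = max s c := by
      simp [lpnorm, abs_of_pos hs, abs_of_pos hc]
    have hcond : ∀ ρ : ℝ, (ENNReal.ofReal (ρ * s) ≤ ypR ⊤ (ρ * c)) ↔
        (ρ < 1 / c ∨ ρ ≤ 1 / s) := by
      intro ρ
      unfold ypR
      rw [if_pos rfl]
      by_cases h : ρ * c < 1
      · simp only [if_pos h, le_top, true_iff]
        exact Or.inl ((lt_div_iff₀ hc).mpr h)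
      · rw [if_neg h]
        rw [show ((1:ℝ≥0∞) = ENNReal.ofReal 1) by simp,
          ENNReal.ofReal_le_ofReal_iff zero_le_one]
        constructor
        · intro hle; exact Or.inr ((le_div_iff₀ hs).mpr hle)
        · rintro (h1 | h1)
          · exact absurd ((lt_div_iff₀ hc).mp h1) h
          · exact (le_div_iff₀ hs).mp h1
    rcases le_or_gt (1 / c) (1 / s) with h | h
    · have hsc : s ≤ c := by
        rw [div_le_div_iff₀ hc hs] at h; linarith
      have hset : {ρ : ℝ | 0 < ρ ∧ ENNReal.ofReal (ρ * s) ≤ ypR ⊤ (ρ * c)} = Ioc 0 (1 / s) := by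
        ext ρ
        simp only [mem_setOf_eq, hcond, mem_Ioc]
        constructor
        · rintro ⟨h1, h2 | h2⟩
          · exact ⟨h1, le_trans h2.le h⟩
          · exact ⟨h1, h2⟩
        · rintro ⟨h1, h2⟩; exact ⟨h1, Or.inr h2⟩
      rw [hset, Real.volume_Ioc, sub_zero, hlp, max_eq_right hsc]
      congr 1
      field_simp
    · have hcs : c < s := by
        rw [div_lt_div_iff₀ hs hc] at h; linarith
      have hset : {ρ : ℝ | 0 < ρ ∧ ENNReal.ofReal (ρ * s) ≤ ypR ⊤ (ρ * c)} = Ioo 0 (1 / c) := by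
        ext ρ
        simp only [mem_setOf_eq, hcond, mem_Ioo]
        constructor
        · rintro ⟨h1, h2 | h2⟩
          · exact ⟨h1, h2⟩
          · exact ⟨h1, lt_of_le_of_lt h2 h⟩
        · rintro ⟨h1, h2⟩; exact ⟨h1, Or.inl h2⟩
      rw [hset, Real.volume_Ioo, sub_zero, hlp, max_eq_left hcs.le]
      congr 1
      field_simp
  · set t := p.toReal with htdef
    have ht1 : 1 ≤ t := by
      have := ENNReal.toReal_mono hptop hp
      simpa using this
    have ht0 : 0 < t := lt_of_lt_of_le one_pos ht1
    have hlp : lpnorm p (s, c) = (s ^ t + c ^ t) ^ (1 / t) := by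
      simp [lpnorm, hptop, abs_of_pos hs, abs_of_pos hc, htdef]
    set R := (s ^ t + c ^ t) ^ (1 / t) / (s * c) with hRdef
    have hR0 : 0 < R := by positivity
    have hBpos : (0:ℝ) < c ^ t := Real.rpow_pos_of_pos hc t
    have hCpos : (0:ℝ) < s ^ t := Real.rpow_pos_of_pos hs t
    have hRt : R ^ t = (s ^ t + c ^ t) / (c ^ t * s ^ t) := by
      rw [hRdef, Real.div_rpow (by positivity) (by positivity), one_div,
        Real.rpow_inv_rpow (by positivity) ht0.ne', Real.mul_rpow hs.le hc.le]
      ring_nf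
    have key : ∀ ρ : ℝ, 0 < ρ →
        ((ENNReal.ofReal (ρ * s) ≤ ypR p (ρ * c)) ↔ ρ ≤ R) := by
      intro ρ hρ
      have hApos : (0:ℝ) < ρ ^ t := Real.rpow_pos_of_pos hρ t
      rw [ypR_cond hptop ht0 (by positivity) (by positivity), ← htdef,
        Real.mul_rpow hρ.le hc.le, Real.mul_rpow hρ.le hs.le,
        div_add_div _ _ (by positivity : ρ ^ t * c ^ t ≠ 0)
          (by positivity : ρ ^ t * s ^ t ≠ 0),
        le_div_iff₀ (by positivity), one_mul,
        ← Real.rpow_le_rpow_iff hρ.le hR0.le ht0, hRt,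
        le_div_iff₀ (by positivity : (0:ℝ) < c ^ t * s ^ t)]
      constructor <;> intro h <;> nlinarith
    have hset : {ρ : ℝ | 0 < ρ ∧ ENNReal.ofReal (ρ * s) ≤ ypR p (ρ * c)} = Ioc 0 R := by
      ext ρ
      simp only [mem_setOf_eq, mem_Ioc]
      exact ⟨fun ⟨h1, h2⟩ => ⟨h1, (key ρ h1).1 h2⟩, fun ⟨h1, h2⟩ => ⟨h1, (key ρ h1).2 h2⟩⟩
    rw [hset, Real.volume_Ioc, sub_zero, hlp]

lemma measurable_ypR (p : ℝ≥0∞) : Measurable (ypR p) := by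
  unfold ypR
  by_cases hp : p = ⊤
  · simp only [hp, if_true]
    exact Measurable.ite measurableSet_Iio measurable_const measurable_const
  · simp only [hp, if_false]
    refine Measurable.ite measurableSet_Iic measurable_const ?_
    refine Measurable.ennreal_ofReal ?_
    measurability

lemma lpnorm_nonneg (p : ℝ≥0∞) (z : ℝ × ℝ) : 0 ≤ lpnorm p z := by
  unfold lpnorm
  split_ifs
  · exact le_max_of_le_left (abs_nonneg _)
  · positivity

lemma lpnorm_continuous (p : ℝ≥0∞) (hp : 1 ≤ p) :
    Continuous fun ϑ : ℝ => lpnorm p (Real.sin ϑ, Real.cos ϑ) := by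
  unfold lpnorm
  by_cases hptop : p = ⊤
  · simp only [hptop, if_true]
    exact (continuous_sin.abs.max continuous_cos.abs)
  · simp only [hptop, if_false]
    have ht0 : (0:ℝ) ≤ p.toReal := ENNReal.toReal_nonneg
    have h1 : Continuous fun ϑ : ℝ => |Real.sin ϑ| ^ p.toReal := by
      rw [continuous_iff_continuousAt]
      exact fun x => continuous_sin.abs.continuousAt.rpow_const (Or.inr ht0)
    have h2 : Continuous fun ϑ : ℝ => |Real.cos ϑ| ^ p.toReal := by
      rw [continuous_iff_continuousAt]
      exact fun x => continuous_cos.abs.continuousAt.rpow_const (Or.inr ht0)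
    rw [continuous_iff_continuousAt]
    exact fun x => (h1.add h2).continuousAt.rpow_const (Or.inr (by positivity))

theorem stmt17 (r : ℝ) (hr : r ∈ Ioc (0 : ℝ) 1) (p : ℝ≥0∞) (hp : 1 ≤ p) :
    ∀ θ ∈ Ioo (0 : ℝ) (π / 2),
      (∫⁻ z in {z : ℝ × ℝ | 0 < z.1 ∧ 0 < z.2 ∧ z.2 ≤ z.1 * Real.tan θ ∧
          ENNReal.ofReal z.2 ≤ ypR p z.1},
        ENNReal.ofReal (2 * r * z.1 * z.2 / (z.1 + z.2) ^ 3) ∂volume) =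
      ENNReal.ofReal (2 * r *
        ∫ ϑ in (0 : ℝ)..θ,
          lpnorm p (Real.sin ϑ, Real.cos ϑ) / (Real.sin ϑ + Real.cos ϑ) ^ 3) := by
  rintro θ ⟨hθ0, hθ2⟩
  have hr0 : 0 < r := hr.1
  have hπ := Real.pi_pos
  set f : ℝ × ℝ → ℝ≥0∞ := fun z => ENNReal.ofReal (2 * r * z.1 * z.2 / (z.1 + z.2) ^ 3)
    with hfdef
  set S : Set (ℝ × ℝ) := {z : ℝ × ℝ | 0 < z.1 ∧ 0 < z.2 ∧ z.2 ≤ z.1 * Real.tan θ ∧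
      ENNReal.ofReal z.2 ≤ ypR p z.1} with hSdef
  have hS : MeasurableSet S := by
    rw [hSdef]
    simp only [Set.setOf_and]
    exact ((measurableSet_lt measurable_const measurable_fst).inter
      ((measurableSet_lt measurable_const measurable_snd).inter
        ((measurableSet_le measurable_snd (measurable_fst.mul_const _)).inter
          (measurableSet_le measurable_snd.ennreal_ofReal
            ((measurable_ypR p).comp measurable_fst)))))
  have hfm : Measurable f :=
    (((measurable_const.mul measurable_fst).mul measurable_snd).div
      ((measurable_fst.add measurable_snd).pow_const 3)).ennreal_ofReal
  have hsymm : (polarCoord.symm : ℝ × ℝ → ℝ × ℝ) =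
      fun q => (q.1 * Real.cos q.2, q.1 * Real.sin q.2) := rfl
  have hsymm_meas : Measurable (polarCoord.symm : ℝ × ℝ → ℝ × ℝ) := by
    rw [hsymm]
    exact ((continuous_fst.mul (Real.continuous_cos.comp continuous_snd)).prodMk
      (continuous_fst.mul (Real.continuous_sin.comp continuous_snd))).measurable
  have hFm : Measurable fun q : ℝ × ℝ =>
      ENNReal.ofReal q.1 * (S.indicator f) (polarCoord.symm q) :=
    measurable_fst.ennreal_ofReal.mul ((hfm.indicator hS).comp hsymm_meas)
  -- the target function of ϑ
  set G : ℝ → ℝ := fun ϑ =>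
    lpnorm p (Real.sin ϑ, Real.cos ϑ) / (Real.sin ϑ + Real.cos ϑ) ^ 3 with hGdef
  calc
    (∫⁻ z in S, f z ∂volume) = ∫⁻ z, S.indicator f z := (lintegral_indicator hS f).symm
    _ = ∫⁻ q in polarCoord.target, ENNReal.ofReal q.1 * (S.indicator f) (polarCoord.symm q) :=
      lintegral_polarCoord_symm _
    _ = ∫⁻ q in Ioi (0:ℝ) ×ˢ Ioo (-π) π,
        ENNReal.ofReal q.1 * (S.indicator f) (polarCoord.symm q) := by
      rw [polarCoord_target]
    _ = ∫⁻ ϑ in Ioo (-π) π, ∫⁻ ρ in Ioi (0:ℝ),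
        ENNReal.ofReal ρ * (S.indicator f) (polarCoord.symm (ρ, ϑ)) := by
      rw [Measure.volume_eq_prod, ← Measure.prod_restrict, lintegral_prod_symm _ hFm.aemeasurable]
    _ = ∫⁻ ϑ in Ioo (-π) π,
        (Ioc 0 θ).indicator (fun ϑ => ENNReal.ofReal (2 * r * G ϑ)) ϑ := by
      refine setLIntegral_congr_fun_ae measurableSet_Ioo (Filter.Eventually.of_forall ?_)
      intro ϑ hϑ
      by_cases hmem : ϑ ∈ Ioc 0 θ
      · -- main case
        obtain ⟨hϑ0, hϑθ⟩ := hmem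
        have hϑ2 : ϑ < π / 2 := lt_of_le_of_lt hϑθ hθ2
        have hs : 0 < Real.sin ϑ := Real.sin_pos_of_pos_of_lt_pi hϑ0 (by linarith)
        have hc : 0 < Real.cos ϑ := Real.cos_pos_of_mem_Ioo ⟨by linarith, hϑ2⟩
        have htanle : Real.tan ϑ ≤ Real.tan θ := by
          rcases eq_or_lt_of_le hϑθ with h | h
          · rw [h]
          · exact (tan_lt_tan_of_lt_of_lt_pi_div_two (by linarith) hθ2 h).le
        have htan : Real.sin ϑ ≤ Real.cos ϑ * Real.tan θ := by
          have h1 : Real.sin ϑ = Real.cos ϑ * Real.tan ϑ := by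
            rw [Real.tan_eq_sin_div_cos]
            field_simp
          rw [h1]
          exact mul_le_mul_of_nonneg_left htanle hc.le
        have hscpos : (0:ℝ) < Real.sin ϑ + Real.cos ϑ := by linarith
        set T : Set ℝ := {ρ' : ℝ | 0 < ρ' ∧
            ENNReal.ofReal (ρ' * Real.sin ϑ) ≤ ypR p (ρ' * Real.cos ϑ)} with hTdef
        have hTsub : T ⊆ Ioi 0 := fun ρ hρ => hρ.1
        have hTm : MeasurableSet T := by
          rw [hTdef]
          simp only [Set.setOf_and]
          exact (measurableSet_lt measurable_const measurable_id).inter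
            (measurableSet_le (measurable_id.mul_const _).ennreal_ofReal
              ((measurable_ypR p).comp (measurable_id.mul_const _)))
        set K : ℝ := 2 * r * (Real.sin ϑ * Real.cos ϑ / (Real.sin ϑ + Real.cos ϑ) ^ 3)
          with hKdef
        have hK0 : 0 ≤ K := by positivity
        have hpt : ∀ ρ ∈ Ioi (0:ℝ),
            ENNReal.ofReal ρ * (S.indicator f) (polarCoord.symm (ρ, ϑ)) =
              T.indicator (fun _ => ENNReal.ofReal K) ρ := by
          intro ρ hρ
          have hρ0 : 0 < ρ := hρ
          have hsymmpt : polarCoord.symm (ρ, ϑ) = (ρ * Real.cos ϑ, ρ * Real.sin ϑ) := rfl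
          rw [hsymmpt]
          by_cases hcond : ENNReal.ofReal (ρ * Real.sin ϑ) ≤ ypR p (ρ * Real.cos ϑ)
          · have hzS : ((ρ * Real.cos ϑ, ρ * Real.sin ϑ) : ℝ × ℝ) ∈ S := by
              refine ⟨by positivity, by positivity, ?_, hcond⟩
              show ρ * Real.sin ϑ ≤ ρ * Real.cos ϑ * Real.tan θ
              rw [mul_assoc]
              exact mul_le_mul_of_nonneg_left htan hρ0.le
            have hρT : ρ ∈ T := ⟨hρ0, hcond⟩
            rw [Set.indicator_of_mem hρT, Set.indicator_of_mem hzS, hfdef]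
            simp only
            rw [← ENNReal.ofReal_mul hρ0.le]
            congr 1
            rw [hKdef]
            have e1 : (ρ * Real.cos ϑ + ρ * Real.sin ϑ) ^ 3 =
                ρ ^ 3 * (Real.cos ϑ + Real.sin ϑ) ^ 3 := by ring
            field_simp [e1]
            ring
          · have h1 : ((ρ * Real.cos ϑ, ρ * Real.sin ϑ) : ℝ × ℝ) ∉ S :=
              fun hz => hcond hz.2.2.2
            have h2 : ρ ∉ T := fun hz => hcond hz.2
            rw [Set.indicator_of_notMem h1, Set.indicator_of_notMem h2, mul_zero]
        rw [setLIntegral_congr_fun_ae measurableSet_Ioi (Filter.Eventually.of_forall hpt),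
          lintegral_indicator hTm, Measure.restrict_restrict hTm,
          inter_eq_left.mpr hTsub, setLIntegral_const,
          radial_volume p hp hs hc,
          Set.indicator_of_mem (show ϑ ∈ Ioc 0 θ from ⟨hϑ0, hϑθ⟩),
          ← ENNReal.ofReal_mul hK0]
        congr 1
        rw [hKdef, hGdef]
        have hlpn := lpnorm_nonneg p (Real.sin ϑ, Real.cos ϑ)
        field_simp
      · -- the indicator vanishes
        rw [Set.indicator_of_notMem hmem]
        have hnot : ∀ ρ ∈ Ioi (0:ℝ),
            ENNReal.ofReal ρ * (S.indicator f) (polarCoord.symm (ρ, ϑ)) = 0 := by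
          intro ρ hρ
          have hρ0 : 0 < ρ := hρ
          have hsymmpt : polarCoord.symm (ρ, ϑ) = (ρ * Real.cos ϑ, ρ * Real.sin ϑ) := rfl
          rw [hsymmpt]
          obtain ⟨hϑl, hϑr⟩ := hϑ
          have hzS : ((ρ * Real.cos ϑ, ρ * Real.sin ϑ) : ℝ × ℝ) ∉ S := by
            intro hz
            obtain ⟨hz1, hz2, hz3, _⟩ := hz
            rcases le_or_gt ϑ 0 with h | hϑpos
            · have hsin : Real.sin ϑ ≤ 0 :=
                Real.sin_nonpos_of_nonpos_of_neg_pi_le h (by linarith)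
              simp only at hz2
              nlinarith
            · have h : θ < ϑ := by
                by_contra hcon
                push_neg at hcon
                exact hmem ⟨hϑpos, hcon⟩
              by_cases h2 : ϑ < π / 2
              · have hc : 0 < Real.cos ϑ := Real.cos_pos_of_mem_Ioo ⟨by linarith, h2⟩
                have htanlt : Real.tan θ < Real.tan ϑ :=
                  tan_lt_tan_of_lt_of_lt_pi_div_two (by linarith) h2 h
                have hsin : Real.sin ϑ ≤ Real.cos ϑ * Real.tan θ := by
                  have h4 : ρ * Real.sin ϑ ≤ ρ * (Real.cos ϑ * Real.tan θ) := by
                    rw [← mul_assoc]; exact hz3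
                  exact le_of_mul_le_mul_left h4 hρ0
                have h3 : Real.sin ϑ = Real.cos ϑ * Real.tan ϑ := by
                  rw [Real.tan_eq_sin_div_cos]; field_simp
                nlinarith
              · push_neg at h2
                have hcos : Real.cos ϑ ≤ 0 :=
                  Real.cos_nonpos_of_pi_div_two_le_of_le h2 (by linarith)
                simp only at hz1
                nlinarith
          rw [Set.indicator_of_notMem hzS, mul_zero]
        rw [setLIntegral_congr_fun_ae measurableSet_Ioi (Filter.Eventually.of_forall hnot)]
        simp
    _ = ∫⁻ ϑ in Ioc 0 θ, ENNReal.ofReal (2 * r * G ϑ) := by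
      rw [lintegral_indicator measurableSet_Ioc, Measure.restrict_restrict measurableSet_Ioc,
        inter_eq_left.mpr (fun x hx =>
          mem_Ioo.mpr ⟨by linarith [hx.1], by linarith [hx.2]⟩)]
    _ = ENNReal.ofReal (2 * r * ∫ ϑ in (0:ℝ)..θ, G ϑ) := by
      have hGcont : ContinuousOn (fun ϑ => 2 * r * G ϑ) (Icc 0 θ) := by
        refine continuousOn_const.mul ?_
        refine ContinuousOn.div (lpnorm_continuous p hp).continuousOn
          ((continuous_sin.add continuous_cos).pow 3).continuousOn ?_
        intro x hx
        obtain ⟨hx0, hxθ⟩ := hx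
        have hsx : 0 ≤ Real.sin x := Real.sin_nonneg_of_nonneg_of_le_pi hx0 (by linarith)
        have hcx : 0 < Real.cos x := Real.cos_pos_of_mem_Ioo ⟨by linarith, by linarith⟩
        positivity
      have hInt : IntegrableOn (fun ϑ => 2 * r * G ϑ) (Ioc 0 θ) volume :=
        (hGcont.integrableOn_Icc).mono_set Ioc_subset_Icc_self
      have hnn : 0 ≤ᵐ[volume.restrict (Ioc 0 θ)] fun ϑ => 2 * r * G ϑ := by
        refine (ae_restrict_iff' measurableSet_Ioc).mpr (Filter.Eventually.of_forall ?_)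
        intro x hx
        obtain ⟨hx0, hxθ⟩ := hx
        have hsx : 0 < Real.sin x := Real.sin_pos_of_pos_of_lt_pi hx0 (by linarith)
        have hcx : 0 < Real.cos x := Real.cos_pos_of_mem_Ioo ⟨by linarith, by linarith⟩
        have hlpn := lpnorm_nonneg p (Real.sin x, Real.cos x)
        have : 0 ≤ G x := by rw [hGdef]; positivity
        positivity
      rw [intervalIntegral.integral_of_le hθ0.le, ← integral_const_mul]
      exact (MeasureTheory.ofReal_integral_eq_lintegral_ofReal hInt hnn).symm
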